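/- arXiv:2109.11729 — 2 statements merged into one kernel-verified Lean document; each statement's English description precedes it below -/
import Mathlib

section
/- Let n ≥ 2, p ∈ (1,∞), and let z ∈ ∂K_q^{n+1} \ {0} (with 1/p+1/q=1) be such that |J_z| ≥ 2, where J_z = {i : z̄_i ≠ 0}. Let F_z = {z}^⊥ ∩ K_p^{n+1}. Then there exists a continuous function w : (0,1] → {z}^⊥ \ F_z with lim_{ε↓0} w_ε = f (where f generates the ray F_z) and limsup_{ε↓0} dist(w_ε, K_p^{n+1})^(1/2) / dist(w_ε, F_z) < ∞. -/
open scoped RealInnerProductSpace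

lemma ev_abs_pos {c d : ℝ} (hc : 0 < c) : ∀ᶠ ε in nhds (0:ℝ), |c + ε * d| = c + ε * d := by
  have : Filter.Tendsto (fun ε : ℝ => c + ε * d) (nhds 0) (nhds c) := by
    have : Continuous fun ε : ℝ => c + ε * d := by continuity
    simpa using this.tendsto 0
  filter_upwards [this.eventually (eventually_gt_nhds hc)] with ε hε
  exact abs_of_pos hε

lemma ev_abs_neg {c d : ℝ} (hc : c < 0) : ∀ᶠ ε in nhds (0:ℝ), |c + ε * d| = -(c + ε * d) := by
  have : Filter.Tendsto (fun ε : ℝ => c + ε * d) (nhds 0) (nhds c) := by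
    have : Continuous fun ε : ℝ => c + ε * d := by continuity
    simpa using this.tendsto 0
  filter_upwards [this.eventually (eventually_lt_nhds hc)] with ε hε
  exact abs_of_neg hε

lemma affine_hasDerivAt (c d : ℝ) : HasDerivAt (fun ε : ℝ => c + ε * d) d 0 :=
  ((hasDerivAt_id 0).mul_const d).const_add c |>.congr_deriv (by simp)

lemma abs_rpow_contDiffAt (c d p : ℝ) (h : c ≠ 0 ∨ d = 0) :
    ContDiffAt ℝ 2 (fun ε : ℝ => |c + ε * d| ^ p) 0 := by
  rcases h with hc | hd
  · rcases hc.lt_or_gt with hc | hc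
    · have key : ContDiffAt ℝ 2 (fun ε : ℝ => (-(c + ε * d)) ^ p) 0 := by
        have houter : ContDiffAt ℝ 2 (fun x : ℝ => x ^ p) (-(c + 0 * d)) :=
          Real.contDiffAt_rpow_const_of_ne (by simpa using (neg_pos.2 hc).ne')
        have hinner : ContDiffAt ℝ 2 (fun ε : ℝ => -(c + ε * d)) 0 := by
          exact ((contDiff_const.add (contDiff_id.mul contDiff_const)).neg).contDiffAt
        exact houter.comp 0 hinner
      exact key.congr_of_eventuallyEq ((ev_abs_neg (d := d) hc).mono fun ε hε => by simp only [hε])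
    · have key : ContDiffAt ℝ 2 (fun ε : ℝ => (c + ε * d) ^ p) 0 := by
        have houter : ContDiffAt ℝ 2 (fun x : ℝ => x ^ p) (c + 0 * d) :=
          Real.contDiffAt_rpow_const_of_ne (by simpa using hc.ne')
        exact houter.comp 0 (contDiff_const.add (contDiff_id.mul contDiff_const)).contDiffAt
      exact key.congr_of_eventuallyEq ((ev_abs_pos (d := d) hc).mono fun ε hε => by simp only [hε])
  · subst hd
    exact (contDiffAt_const (c := |c| ^ p)).congr_of_eventuallyEq
      (Filter.Eventually.of_forall fun ε => by simp)

lemma abs_rpow_hasDerivAt (c d p : ℝ) (hp : 1 < p) (h : c ≠ 0 ∨ d = 0) :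
    HasDerivAt (fun ε : ℝ => |c + ε * d| ^ p) (p * |c| ^ (p - 1) * Real.sign c * d) 0 := by
  rcases h with hc | hd
  · rcases hc.lt_or_gt with hc | hc
    · have houter : HasDerivAt (fun x : ℝ => x ^ p) (p * (-c) ^ (p - 1)) (-(c + 0 * d)) := by
        have := Real.hasDerivAt_rpow_const (x := -(c + 0 * d)) (p := p)
          (Or.inl (by simpa using (neg_pos.2 hc).ne'))
        simpa using this
      have hinner : HasDerivAt (fun ε : ℝ => -(c + ε * d)) (-d) 0 := (affine_hasDerivAt c d).neg
      have key := houter.comp 0 hinner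
      have key2 : HasDerivAt (fun ε : ℝ => (-(c + ε * d)) ^ p) (p * |c| ^ (p - 1) * Real.sign c * d) 0 := by
        refine key.congr_deriv ?_
        rw [abs_of_neg hc, Real.sign_of_neg hc]; ring
      exact key2.congr_of_eventuallyEq ((ev_abs_neg (d := d) hc).mono fun ε hε => by simp only [hε])
    · have houter : HasDerivAt (fun x : ℝ => x ^ p) (p * c ^ (p - 1)) (c + 0 * d) := by
        have := Real.hasDerivAt_rpow_const (x := c + 0 * d) (p := p) (Or.inl (by simpa using hc.ne'))
        simpa using this
      have key := houter.comp 0 (affine_hasDerivAt c d)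
      have key2 : HasDerivAt (fun ε : ℝ => (c + ε * d) ^ p) (p * |c| ^ (p - 1) * Real.sign c * d) 0 := by
        refine key.congr_deriv ?_
        rw [abs_of_pos hc, Real.sign_of_pos hc]; ring
      exact key2.congr_of_eventuallyEq ((ev_abs_pos (d := d) hc).mono fun ε hε => by simp only [hε])
  · subst hd
    have : HasDerivAt (fun _ : ℝ => |c + 0| ^ p) 0 0 := hasDerivAt_const _ _
    have key : HasDerivAt (fun ε : ℝ => |c + ε * 0| ^ p) 0 0 := by simpa using this
    simpa using key

lemma quad_bound (h : ℝ → ℝ) (hC : ContDiffAt ℝ 2 h 0) (hd : deriv h 0 = 0) :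
    ∃ K : ℝ, 0 ≤ K ∧ ∀ᶠ t in nhds (0:ℝ), |h t - h 0| ≤ K * t ^ 2 := by
  have hder : ContDiffAt ℝ 1 (deriv h) 0 := by
    have h1 : ContDiffAt ℝ 1 (fderiv ℝ h) 0 := hC.fderiv_right (by norm_num)
    have h2 : ContDiffAt ℝ 1 (fun x => fderiv ℝ h x 1) 0 := h1.clm_apply contDiffAt_const
    exact h2.congr_of_eventuallyEq (Filter.Eventually.of_forall fun x => (fderiv_apply_one_eq_deriv).symm)
  obtain ⟨K, t, ht, hlip⟩ := hder.exists_lipschitzOnWith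
  have hdiff : ∀ᶠ x in nhds (0:ℝ), DifferentiableAt ℝ h x :=
    (hC.eventually (by norm_num)).mono fun x hx => hx.differentiableAt (by norm_num)
  obtain ⟨δ, hδpos, hδ⟩ := Metric.mem_nhds_iff.1 (Filter.inter_mem ht hdiff)
  refine ⟨K, K.coe_nonneg, Metric.eventually_nhds_iff.2 ⟨δ, hδpos, fun {x} hx => ?_⟩⟩
  have hsub : Set.uIcc (0:ℝ) x ⊆ Metric.ball 0 δ := by
    intro y hy
    rw [Set.uIcc_eq_union] at hy
    simp only [Metric.mem_ball, Real.dist_eq, sub_zero] at *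
    rcases hy with hy | hy <;> rw [Set.mem_Icc] at hy <;>
      [skip; skip] <;> · cases abs_cases y <;> cases abs_cases x <;> nlinarith [hy.1, hy.2]
  have hb : ∀ y ∈ Set.uIcc (0:ℝ) x, ‖deriv h y‖ ≤ K * |x| := by
    intro y hy
    have hyb := hsub hy
    have h1 : |deriv h y - deriv h 0| ≤ K * |y - 0| := by
      have := hlip.dist_le_mul y (hδ hyb).1 0 (hδ (Metric.mem_ball_self hδpos)).1
      simpa [Real.dist_eq] using this
    rw [hd, sub_zero, sub_zero] at h1
    have hyx : |y| ≤ |x| := by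
      rw [Set.uIcc_eq_union] at hy
      rcases hy with hy | hy <;> rw [Set.mem_Icc] at hy <;>
        cases abs_cases y <;> cases abs_cases x <;> nlinarith [hy.1, hy.2]
    calc ‖deriv h y‖ = |deriv h y| := rfl
      _ ≤ K * |y| := h1
      _ ≤ K * |x| := by gcongr
  have := (convex_uIcc (0:ℝ) x).norm_image_sub_le_of_norm_deriv_le (f := h) (s := Set.uIcc (0:ℝ) x)
    (fun y hy => ((hδ (hsub hy)).2)) hb Set.left_mem_uIcc Set.right_mem_uIcc
  calc |h x - h 0| ≤ K * |x| * ‖x - 0‖ := this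
    _ = K * x ^ 2 := by rw [sub_zero, Real.norm_eq_abs]; ring_nf; rw [sq_abs]

lemma real_sign_mul_self (x : ℝ) : Real.sign x * x = |x| := by
  rcases lt_trichotomy x 0 with h | h | h
  · rw [Real.sign_of_neg h, abs_of_neg h]; ring
  · simp [h]
  · rw [Real.sign_of_pos h, abs_of_pos h]; ring

lemma real_sign_mul_abs (x : ℝ) : Real.sign x * |x| = x := by
  rcases lt_trichotomy x 0 with h | h | h
  · rw [Real.sign_of_neg h, abs_of_neg h]; ring
  · simp [h]
  · rw [Real.sign_of_pos h, abs_of_pos h]; ring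

lemma coord_abs_le_norm {m : ℕ} (x : EuclideanSpace ℝ (Fin m)) (k : Fin m) : |x k| ≤ ‖x‖ := by
  rw [EuclideanSpace.norm_eq]
  have h1 : |x k| = Real.sqrt (‖x k‖ ^ 2) := by
    rw [Real.sqrt_sq_eq_abs, Real.norm_eq_abs, abs_abs]
  rw [h1]
  apply Real.sqrt_le_sqrt
  exact Finset.single_le_sum (fun i _ => sq_nonneg ‖x i‖) (Finset.mem_univ k)

set_option maxHeartbeats 1000000 in
/-- Lemma 4.5: when `|J_z| ≥ 2`, there is a curve `w_ε` in `{z}^⊥ \ F_z`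
converging to `f` whose distance ratio of order `1/2` stays bounded. -/
theorem stmt_13 (n : ℕ) (hn : 2 ≤ n) (p q : ℝ) (hp : 1 < p) (hq : 1 < q)
    (hpq : 1 / p + 1 / q = 1)
    (z : EuclideanSpace ℝ (Fin (n + 1)))
    (hz0 : z 0 = (∑ i : Fin n, |z i.succ| ^ q) ^ (1 / q)) (hz0pos : 0 < z 0)
    (hJ : 2 ≤ {i : Fin n | z i.succ ≠ 0}.ncard)
    (f : EuclideanSpace ℝ (Fin (n + 1))) (hf0 : f 0 = 1)
    (hfi : ∀ i : Fin n, f i.succ = -Real.sign (z i.succ) * |(z 0)⁻¹ * z i.succ| ^ (q - 1)) :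
    let Kp : Set (EuclideanSpace ℝ (Fin (n + 1))) :=
      {x | (∑ i : Fin n, |x i.succ| ^ p) ^ (1 / p) ≤ x 0}
    let Fz : Set (EuclideanSpace ℝ (Fin (n + 1))) := {x | ∃ t : ℝ, 0 ≤ t ∧ x = t • f}
    ∃ w : ℝ → EuclideanSpace ℝ (Fin (n + 1)),
      ContinuousOn w (Set.Ioc 0 1) ∧
      (∀ ε ∈ Set.Ioc (0 : ℝ) 1, ⟪w ε, z⟫ = 0 ∧ w ε ∉ Fz) ∧
      Filter.Tendsto w (nhdsWithin 0 (Set.Ioi 0)) (nhds f) ∧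
      ∃ M : ℝ, ∀ᶠ ε in nhdsWithin (0 : ℝ) (Set.Ioi 0),
        Metric.infDist (w ε) Kp ^ ((1 : ℝ) / 2) / Metric.infDist (w ε) Fz ≤ M := by
  intro Kp Fz
  -- basic exponent arithmetic
  have hp0 : (0:ℝ) < p := by linarith
  have hq0 : (0:ℝ) < q := by linarith
  have hpne : p ≠ 0 := hp0.ne'
  have hqne : q ≠ 0 := hq0.ne'
  have hpqsum : q + p = p * q := by
    field_simp at hpq
    linarith
  have hq1p : (q - 1) * p = q := by nlinarith [hpqsum]
  have hpq1 : (p - 1) * (q - 1) = 1 := by nlinarith [hpqsum]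
  -- two active indices
  obtain ⟨i, j, hzi, hzj, hij⟩ :
      ∃ a b : Fin n, z a.succ ≠ 0 ∧ z b.succ ≠ 0 ∧ a ≠ b := by
    have h2 : 1 < {i : Fin n | z i.succ ≠ 0}.ncard := lt_of_lt_of_le one_lt_two hJ
    obtain ⟨a, b, ha, hb, hab⟩ := (Set.one_lt_ncard_iff (Set.toFinite _)).1 h2
    exact ⟨a, b, ha, hb, hab⟩
  -- the cone facts about z and f
  have hsumnn : 0 ≤ ∑ k : Fin n, |z k.succ| ^ q :=
    Finset.sum_nonneg fun k _ => Real.rpow_nonneg (abs_nonneg _) q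
  have hzq : z 0 ^ q = ∑ k : Fin n, |z k.succ| ^ q := by
    rw [hz0, ← Real.rpow_mul hsumnn, one_div_mul_cancel hqne, Real.rpow_one]
  have habsf : ∀ k : Fin n, |f k.succ| = |(z 0)⁻¹ * z k.succ| ^ (q - 1) := by
    intro k
    rw [hfi]
    rcases eq_or_ne (z k.succ) 0 with hk | hk
    · simp [hk, Real.zero_rpow (show q - 1 ≠ 0 by linarith)]
    · rw [abs_mul, abs_neg, abs_of_nonneg (Real.rpow_nonneg (abs_nonneg _) _)]
      rcases Real.sign_apply_eq_of_ne_zero _ hk with hs | hs <;> rw [hs] <;> norm_num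
  have hfne : ∀ k : Fin n, z k.succ ≠ 0 → f k.succ ≠ 0 := by
    intro k hk
    have h1 : (z 0)⁻¹ * z k.succ ≠ 0 := by
      apply mul_ne_zero (inv_ne_zero hz0pos.ne') hk
    have h2 : (0:ℝ) < |(z 0)⁻¹ * z k.succ| ^ (q - 1) :=
      Real.rpow_pos_of_pos (abs_pos.2 h1) _
    intro hc
    rw [← abs_eq_zero] at hc
    rw [habsf k] at hc
    exact h2.ne' hc
  have hfp : ∀ k : Fin n, |f k.succ| ^ p = (z 0)⁻¹ ^ q * |z k.succ| ^ q := by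
    intro k
    rw [habsf k, ← Real.rpow_mul (abs_nonneg _) (q-1) p, hq1p, abs_mul, abs_inv,
      abs_of_pos hz0pos, Real.mul_rpow (inv_nonneg.2 hz0pos.le) (abs_nonneg _),
      Real.inv_rpow hz0pos.le, ← Real.inv_rpow hz0pos.le]
  have hsum1 : ∑ k : Fin n, |f k.succ| ^ p = 1 := by
    have : ∑ k : Fin n, |f k.succ| ^ p = (z 0)⁻¹ ^ q * ∑ k : Fin n, |z k.succ| ^ q := by
      rw [Finset.mul_sum]
      exact Finset.sum_congr rfl fun k _ => hfp k
    rw [this, ← hzq, ← Real.mul_rpow (inv_nonneg.2 hz0pos.le) hz0pos.le,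
      inv_mul_cancel₀ hz0pos.ne', Real.one_rpow]
  have hterm : ∀ k : Fin n, f k.succ * z k.succ = -((z 0)⁻¹ ^ (q-1) * |z k.succ| ^ q) := by
    intro k
    rcases eq_or_ne (z k.succ) 0 with hk | hk
    · simp [hk, Real.zero_rpow hqne]
    · have habs : |(z 0)⁻¹ * z k.succ| ^ (q-1) = (z 0)⁻¹ ^ (q-1) * |z k.succ| ^ (q-1) := by
        rw [abs_mul, abs_inv, abs_of_pos hz0pos,
          Real.mul_rpow (inv_nonneg.2 hz0pos.le) (abs_nonneg _)]
      have hq' : |z k.succ| ^ (q - 1) * |z k.succ| = |z k.succ| ^ q := by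
        rw [← Real.rpow_add_one (abs_ne_zero.2 hk) (q-1), sub_add_cancel]
      calc f k.succ * z k.succ
          = -((z 0)⁻¹ ^ (q-1) * (|z k.succ| ^ (q-1) * (Real.sign (z k.succ) * z k.succ))) := by
            rw [hfi, habs]; ring
        _ = -((z 0)⁻¹ ^ (q-1) * |z k.succ| ^ q) := by
            rw [real_sign_mul_self, hq']
  have hz1 : (z 0)⁻¹ ^ (q-1) * (z 0) ^ q = z 0 := by
    rw [Real.inv_rpow hz0pos.le, inv_mul_eq_div, ← Real.rpow_sub hz0pos, sub_sub_cancel,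
      Real.rpow_one]
  have hinner_fz : ⟪f, z⟫ = 0 := by
    rw [PiLp.inner_apply]
    simp only [RCLike.inner_apply, conj_trivial]
    rw [Fin.sum_univ_succ]
    have hsum : ∑ k : Fin n, f k.succ * z k.succ = -((z 0)⁻¹ ^ (q-1) * ∑ k : Fin n, |z k.succ| ^ q) := by
      rw [Finset.mul_sum, ← Finset.sum_neg_distrib]
      exact Finset.sum_congr rfl fun k _ => hterm k
    simp only [mul_comm (z _) (f _)]
    rw [hsum, ← hzq, hz1, hf0]
    ring
  -- the transverse direction v
  set v : EuclideanSpace ℝ (Fin (n + 1)) :=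
    WithLp.toLp 2 (fun k => if k = i.succ then z j.succ else if k = j.succ then -(z i.succ) else 0 :
      Fin (n+1) → ℝ) with hvdef
  have hvapp : ∀ k : Fin (n+1), v k = if k = i.succ then z j.succ else if k = j.succ then -(z i.succ) else 0 :=
    fun k => rfl
  have hvi : v i.succ = z j.succ := by simp [hvapp]
  have hvj : v j.succ = -(z i.succ) := by
    simp [hvapp, Fin.succ_inj, hij.symm]
  have hvk : ∀ k : Fin n, k ≠ i → k ≠ j → v k.succ = 0 := by
    intro k h1 h2; simp [hvapp, Fin.succ_inj, h1, h2]
  have hv0 : v 0 = 0 := by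
    rw [hvapp]
    rw [if_neg (fun h => Fin.succ_ne_zero i h.symm), if_neg (fun h => Fin.succ_ne_zero j h.symm)]
  have hvz : ⟪v, z⟫ = 0 := by
    rw [PiLp.inner_apply]
    simp only [RCLike.inner_apply, conj_trivial]
    simp only [mul_comm (z _) (v _)]
    have hsplit : ∀ k : Fin (n+1), v k * z k =
        (if k = i.succ then z j.succ * z k else 0) + (if k = j.succ then -(z i.succ) * z k else 0) := by
      intro k
      by_cases h1 : k = i.succ
      · subst h1
        rw [if_pos rfl, if_neg (show i.succ ≠ j.succ by simp [Fin.succ_inj, hij]), hvi, add_zero]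
      · by_cases h2 : k = j.succ
        · subst h2
          rw [if_neg h1, if_pos rfl, hvj, zero_add]
        · rw [if_neg h1, if_neg h2, add_zero]
          have hv : v k = 0 := by rw [hvapp, if_neg h1, if_neg h2]
          rw [hv, zero_mul]
    simp only [hsplit]
    rw [Finset.sum_add_distrib, Finset.sum_ite_eq' Finset.univ, Finset.sum_ite_eq' Finset.univ]
    simp
    ring
  -- the curve
  set w : ℝ → EuclideanSpace ℝ (Fin (n + 1)) := fun ε => f + ε • v with hwdef
  have hwcoord : ∀ ε : ℝ, ∀ k : Fin (n+1), w ε k = f k + ε * v k := fun ε k => rfl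
  have hwcont : Continuous w := by
    rw [hwdef]; fun_prop
  have hworth : ∀ ε : ℝ, ⟪w ε, z⟫ = 0 := by
    intro ε
    rw [hwdef]
    simp only [inner_add_left, real_inner_smul_left, hinner_fz, hvz]
    ring
  have hwnot : ∀ ε : ℝ, 0 < ε → w ε ∉ Fz := by
    rintro ε hε ⟨t, ht, heq⟩
    have h0 : w ε 0 = (t • f) 0 := by rw [heq]
    have hi' : w ε i.succ = (t • f) i.succ := by rw [heq]
    rw [hwcoord ε 0] at h0
    rw [hwcoord ε i.succ] at hi'
    have hsf0 : (t • f) 0 = t * f 0 := rfl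
    have hsfi : (t • f) i.succ = t * f i.succ := rfl
    rw [hsf0, hf0, hv0] at h0
    have ht1 : t = 1 := by linarith [h0]
    rw [hsfi, ht1, one_mul, hvi] at hi'
    have : ε * z j.succ = 0 := by linarith [hi']
    exact hzj (by
      rcases mul_eq_zero.1 this with h | h
      · exact absurd h hε.ne'
      · exact h)
  -- scalar functions
  set S : ℝ → ℝ := fun ε => ∑ k : Fin n, |f k.succ + ε * v k.succ| ^ p with hSdef
  have hcase : ∀ k : Fin n, f k.succ ≠ 0 ∨ v k.succ = 0 := by
    intro k
    by_cases h1 : k = i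
    · exact Or.inl (h1 ▸ hfne i hzi)
    · by_cases h2 : k = j
      · exact Or.inl (h2 ▸ hfne j hzj)
      · exact Or.inr (hvk k h1 h2)
  have hS0 : S 0 = 1 := by
    rw [hSdef]; simpa using hsum1
  have hScd : ContDiffAt ℝ 2 S 0 :=
    ContDiffAt.sum fun k _ => abs_rpow_contDiffAt _ _ p (hcase k)
  have hSderiv : HasDerivAt S 0 0 := by
    have hall : HasDerivAt S
        (∑ k : Fin n, p * |f k.succ| ^ (p-1) * Real.sign (f k.succ) * v k.succ) 0 :=
      HasDerivAt.fun_sum fun k _ => abs_rpow_hasDerivAt _ _ p hp (hcase k)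
    have hzero : (∑ k : Fin n, p * |f k.succ| ^ (p-1) * Real.sign (f k.succ) * v k.succ) = 0 := by
      have habs1 : ∀ k : Fin n, z k.succ ≠ 0 → |f k.succ| ^ (p-1) = (z 0)⁻¹ * |z k.succ| := by
        intro k hk
        rw [habsf k, ← Real.rpow_mul (abs_nonneg _) (q-1) (p-1),
          show (q-1)*(p-1) = 1 by nlinarith [hpq1], Real.rpow_one, abs_mul, abs_inv,
          abs_of_pos hz0pos]
      have hsgn : ∀ k : Fin n, z k.succ ≠ 0 → Real.sign (f k.succ) = -Real.sign (z k.succ) := by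
        intro k hk
        have hpos : (0:ℝ) < |(z 0)⁻¹ * z k.succ| ^ (q - 1) :=
          Real.rpow_pos_of_pos (abs_pos.2 (mul_ne_zero (inv_ne_zero hz0pos.ne') hk)) _
        rcases hk.lt_or_gt with hneg | hposz
        · have hfk : 0 < f k.succ := by
            rw [hfi k, Real.sign_of_neg hneg, neg_neg, one_mul]; exact hpos
          rw [Real.sign_of_pos hfk, Real.sign_of_neg hneg]; ring
        · have hfk : f k.succ < 0 := by
            rw [hfi k, Real.sign_of_pos hposz, neg_one_mul]
            exact neg_lt_zero.2 hpos
          rw [Real.sign_of_neg hfk, Real.sign_of_pos hposz]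
      have hvanish : ∀ k ∈ Finset.univ, k ∉ ({i, j} : Finset (Fin n)) →
          p * |f k.succ| ^ (p-1) * Real.sign (f k.succ) * v k.succ = 0 := by
        intro k _ hk
        simp only [Finset.mem_insert, Finset.mem_singleton, not_or] at hk
        rw [hvk k hk.1 hk.2, mul_zero]
      rw [← Finset.sum_subset (Finset.subset_univ ({i, j} : Finset (Fin n))) hvanish,
        Finset.sum_pair hij, hvi, hvj, habs1 i hzi, habs1 j hzj, hsgn i hzi, hsgn j hzj]
      have hsi : Real.sign (z i.succ) * |z i.succ| = z i.succ := real_sign_mul_abs _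
      have hsj : Real.sign (z j.succ) * |z j.succ| = z j.succ := real_sign_mul_abs _
      linear_combination (-(p * (z 0)⁻¹ * z j.succ)) * hsi + (p * (z 0)⁻¹ * z i.succ) * hsj
    rwa [hzero] at hall
  set h : ℝ → ℝ := fun ε => S ε ^ ((1:ℝ)/p) with hhdef
  have hhcd : ContDiffAt ℝ 2 h 0 := by
    have houter : ContDiffAt ℝ 2 (fun x : ℝ => x ^ ((1:ℝ)/p)) (S 0) :=
      Real.contDiffAt_rpow_const_of_ne (by rw [hS0]; norm_num)
    exact houter.comp 0 hScd
  have hh0 : h 0 = 1 := by rw [hhdef]; simp only [hS0, Real.one_rpow]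
  have hhd : deriv h 0 = 0 := by
    have houter : HasDerivAt (fun x : ℝ => x ^ ((1:ℝ)/p)) ((1/p) * (S 0) ^ ((1:ℝ)/p - 1)) (S 0) :=
      Real.hasDerivAt_rpow_const (Or.inl (by rw [hS0]; norm_num))
    have h2 : HasDerivAt h ((1/p) * (S 0) ^ ((1:ℝ)/p - 1) * 0) 0 := houter.comp 0 hSderiv
    have h3 := h2.deriv
    simpa using h3
  obtain ⟨K, hK0, hKev⟩ := quad_bound h hhcd hhd
  -- upper bound for the distance of `w ε` to `Kp`
  have hup : ∀ ε : ℝ, Metric.infDist (w ε) Kp ≤ |h ε - 1| := by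
    intro ε
    set m : ℝ := max (h ε - 1) 0 with hmdef
    have hm0 : (0:ℝ) ≤ m := le_max_right _ _
    set e0 : EuclideanSpace ℝ (Fin (n+1)) := EuclideanSpace.single 0 1 with he0def
    set y : EuclideanSpace ℝ (Fin (n+1)) := w ε + m • e0 with hydef
    have he00 : e0 0 = 1 := by simp [he0def, EuclideanSpace.single_apply]
    have he0s : ∀ k : Fin n, e0 k.succ = 0 := by
      intro k; simp [he0def, EuclideanSpace.single_apply, Fin.succ_ne_zero]
    have hy0 : y 0 = 1 + m := by
      have : y 0 = w ε 0 + m * e0 0 := rfl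
      rw [this, hwcoord, hf0, hv0, he00]; ring
    have hys : ∀ k : Fin n, y k.succ = f k.succ + ε * v k.succ := by
      intro k
      have : y k.succ = w ε k.succ + m * e0 k.succ := rfl
      rw [this, hwcoord, he0s]; ring
    have hyK : y ∈ Kp := by
      show (∑ k : Fin n, |y k.succ| ^ p) ^ (1/p) ≤ y 0
      have hsy : ∑ k : Fin n, |y k.succ| ^ p = S ε :=
        Finset.sum_congr rfl fun k _ => by rw [hys k]
      rw [hsy, hy0]
      have : S ε ^ ((1:ℝ)/p) = h ε := rfl
      rw [this]
      have := le_max_left (h ε - 1) 0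
      linarith
    have hdist : dist (w ε) y = m := by
      rw [dist_eq_norm]
      have : w ε - y = -(m • e0) := by rw [hydef]; abel
      rw [this, norm_neg, norm_smul, he0def, EuclideanSpace.norm_single, norm_one,
        Real.norm_eq_abs, abs_of_nonneg hm0, mul_one]
    calc Metric.infDist (w ε) Kp ≤ dist (w ε) y := Metric.infDist_le_dist_of_mem hyK
      _ = m := hdist
      _ ≤ |h ε - 1| := max_le (le_abs_self _) (abs_nonneg _)
  -- lower bound for the distance of `w ε` to `Fz`
  set c : ℝ := min (|z j.succ| / (2 * (|f i.succ| + 1))) (|z j.succ| / 2) with hcdef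
  have hcpos : 0 < c := by
    have h1 : 0 < |z j.succ| := abs_pos.2 hzj
    apply lt_min <;> positivity
  have hlow : ∀ ε : ℝ, 0 < ε → c * ε ≤ Metric.infDist (w ε) Fz := by
    intro ε hε
    have hFzne : Fz.Nonempty := ⟨f, 1, zero_le_one, (one_smul ℝ f).symm⟩
    have := hFzne.to_subtype
    rw [Metric.infDist_eq_iInf]
    refine le_ciInf ?_
    rintro ⟨y, t, ht, rfl⟩
    simp only []
    rw [dist_eq_norm]
    set x : EuclideanSpace ℝ (Fin (n+1)) := w ε - t • f with hxdef
    have hx0 : x 0 = 1 - t := by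
      have : x 0 = w ε 0 - t * f 0 := rfl
      rw [this, hwcoord, hf0, hv0]; ring
    have hxi : x i.succ = (1 - t) * f i.succ + ε * z j.succ := by
      have : x i.succ = w ε i.succ - t * f i.succ := rfl
      rw [this, hwcoord, hvi]; ring
    set B : ℝ := |f i.succ| with hBdef
    set Z : ℝ := |z j.succ| with hZdef
    have hZpos : 0 < Z := abs_pos.2 hzj
    have hB0 : 0 ≤ B := abs_nonneg _
    set δ0 : ℝ := Z / (2 * (B + 1)) with hδ0def
    have hcd : c = min δ0 (Z / 2) := rfl
    rcases le_or_gt (δ0 * ε) |1 - t| with hcase | hcase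
    · calc c * ε ≤ δ0 * ε := by
            have : c ≤ δ0 := hcd ▸ min_le_left _ _
            exact mul_le_mul_of_nonneg_right this hε.le
        _ ≤ |1 - t| := hcase
        _ = |x 0| := by rw [hx0]
        _ ≤ ‖x‖ := coord_abs_le_norm x 0
    · have h3 : ε * Z ≤ |x i.succ| + |1 - t| * B := by
        have he : ε * z j.succ = x i.succ - (1 - t) * f i.succ := by rw [hxi]; ring
        have habs : |ε * z j.succ| ≤ |x i.succ| + |(1 - t) * f i.succ| := by
          rw [he, sub_eq_add_neg]
          exact (abs_add_le _ _).trans (by rw [abs_neg])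
        rw [abs_mul, abs_mul, abs_of_pos hε] at habs
        exact habs
      have hδ0B : δ0 * B ≤ Z / 2 := by
        rw [hδ0def, div_mul_eq_mul_div, div_le_div_iff₀ (by positivity) (by norm_num : (0:ℝ) < 2)]
        have h8 : Z * B ≤ Z * (B + 1) := mul_le_mul_of_nonneg_left (by linarith) hZpos.le
        linarith
      have h5 : |1 - t| * B ≤ δ0 * ε * B :=
        mul_le_mul_of_nonneg_right hcase.le hB0
      have h6 : δ0 * ε * B ≤ ε * (Z / 2) := by
        have := mul_le_mul_of_nonneg_right hδ0B hε.le
        calc δ0 * ε * B = δ0 * B * ε := by ring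
          _ ≤ Z / 2 * ε := this
          _ = ε * (Z / 2) := by ring
      have h7 : c * ε ≤ ε * (Z / 2) := by
        have : c ≤ Z / 2 := hcd ▸ min_le_right _ _
        calc c * ε ≤ Z / 2 * ε := mul_le_mul_of_nonneg_right this hε.le
          _ = ε * (Z / 2) := by ring
      calc c * ε ≤ |x i.succ| := by linarith
        _ ≤ ‖x‖ := coord_abs_le_norm x i.succ
  -- assemble
  refine ⟨w, hwcont.continuousOn, fun ε hε => ⟨hworth ε, hwnot ε hε.1⟩, ?_, ?_⟩
  · have := (hwcont.tendsto 0).mono_left (nhdsWithin_le_nhds (s := Set.Ioi (0:ℝ)))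
    simpa [hwdef] using this
  · refine ⟨K ^ ((1:ℝ)/2) / c, ?_⟩
    filter_upwards [hKev.filter_mono nhdsWithin_le_nhds, self_mem_nhdsWithin] with ε hquad hε
    have hε0 : 0 < ε := hε
    have hnum : Metric.infDist (w ε) Kp ≤ K * ε ^ 2 := by
      refine (hup ε).trans ?_
      rw [← hh0]; exact hquad
    have hnum2 : Metric.infDist (w ε) Kp ^ ((1:ℝ)/2) ≤ K ^ ((1:ℝ)/2) * ε := by
      have h1 : Metric.infDist (w ε) Kp ^ ((1:ℝ)/2) ≤ (K * ε ^ 2) ^ ((1:ℝ)/2) :=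
        Real.rpow_le_rpow Metric.infDist_nonneg hnum (by norm_num)
      have h2 : (K * ε ^ 2) ^ ((1:ℝ)/2) = K ^ ((1:ℝ)/2) * ε := by
        rw [Real.mul_rpow hK0 (sq_nonneg ε), ← Real.rpow_natCast ε 2,
          ← Real.rpow_mul hε0.le]
        norm_num
      rwa [h2] at h1
    have hden := hlow ε hε0
    calc Metric.infDist (w ε) Kp ^ ((1:ℝ)/2) / Metric.infDist (w ε) Fz
        ≤ (K ^ ((1:ℝ)/2) * ε) / (c * ε) := by
          apply div_le_div₀ (by positivity) hnum2 (by positivity) hden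
      _ = K ^ ((1:ℝ)/2) / c := mul_div_mul_right _ _ hε0.ne'
end

section
/- Let p ∈ (1,∞), n ≥ 1. If x = (x₀, x̄) ∈ K_p^{n+1} \ {0} and z = (z₀, z̄) ∈ ∂K_q^{n+1} \ {0} (so z₀ = ‖z̄‖_q > 0, with 1/p+1/q=1) satisfy ⟨x, z⟩ = 0, then x₀ > 0 and x₀⁻¹·x̄ = -sgn(z̄) ∘ |z₀⁻¹·z̄|^(q-1) (componentwise). -/
open scoped RealInnerProductSpace

lemma amgm2_strict {u v w1 w2 : ℝ} (hu : 0 ≤ u) (hv : 0 ≤ v) (hw1 : 0 < w1)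
    (hw2 : 0 < w2) (hw : w1 + w2 = 1) (hne : u ≠ v) :
    u ^ w1 * v ^ w2 < w1 * u + w2 * v := by
  rcases hu.lt_or_eq with hu' | hu'
  · rcases hv.lt_or_eq with hv' | hv'
    · have key := strictConcaveOn_log_Ioi.2 (Set.mem_Ioi.mpr hu') (Set.mem_Ioi.mpr hv')
        hne hw1 hw2 hw
      have hpos : 0 < w1 * u + w2 * v := by positivity
      have h1 : u ^ w1 * v ^ w2 = Real.exp (w1 * Real.log u + w2 * Real.log v) := by
        rw [Real.exp_add, Real.rpow_def_of_pos hu', Real.rpow_def_of_pos hv']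
        ring_nf
      rw [h1]
      calc Real.exp (w1 * Real.log u + w2 * Real.log v)
          < Real.exp (Real.log (w1 * u + w2 * v)) := by
            apply Real.exp_lt_exp.mpr
            simpa [smul_eq_mul] using key
        _ = w1 * u + w2 * v := Real.exp_log hpos
    · -- v = 0
      have hu0 : 0 < u := lt_of_le_of_ne hu (by rw [← hv'] at hne; exact Ne.symm hne)
      rw [← hv', Real.zero_rpow hw2.ne', mul_zero, mul_zero, add_zero]
      positivity
  · -- u = 0
    have hv0 : 0 < v := lt_of_le_of_ne hv (by rw [← hu'] at hne; exact hne)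
    rw [← hu', Real.zero_rpow hw1.ne', zero_mul, mul_zero, zero_add]
    positivity

lemma young_eq {a b p q : ℝ} (ha : 0 ≤ a) (hb : 0 ≤ b) (hp : 1 < p) (hq : 1 < q)
    (hpq : 1 / p + 1 / q = 1) (heq : a * b = a ^ p / p + b ^ q / q) :
    a ^ p = b ^ q := by
  by_contra hne
  have hp0 : (0:ℝ) < p := by linarith
  have hq0 : (0:ℝ) < q := by linarith
  have key := amgm2_strict (Real.rpow_nonneg ha p) (Real.rpow_nonneg hb q)
    (by positivity : (0:ℝ) < 1/p) (by positivity : (0:ℝ) < 1/q) hpq hne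
  have h1 : (a ^ p) ^ (1/p) = a := by
    rw [← Real.rpow_mul ha, mul_one_div_cancel hp0.ne', Real.rpow_one]
  have h2 : (b ^ q) ^ (1/q) = b := by
    rw [← Real.rpow_mul hb, mul_one_div_cancel hq0.ne', Real.rpow_one]
  rw [h1, h2, heq] at key
  simp only [div_eq_mul_inv, one_div] at key
  linarith

/-- If `x ∈ K_p^{n+1} \ {0}` is orthogonal to `z ∈ ∂K_q^{n+1} \ {0}`, then
`x₀ > 0` and `x₀⁻¹·x̄ = -sgn(z̄) ∘ |z₀⁻¹·z̄|^(q-1)`. -/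
theorem stmt_19 (n : ℕ) (hn : 1 ≤ n) (p q : ℝ) (hp : 1 < p) (hq : 1 < q)
    (hpq : 1 / p + 1 / q = 1)
    (x : EuclideanSpace ℝ (Fin (n + 1)))
    (hx : (∑ i : Fin n, |x i.succ| ^ p) ^ (1 / p) ≤ x 0) (hx0 : x ≠ 0)
    (z : EuclideanSpace ℝ (Fin (n + 1)))
    (hz0 : z 0 = (∑ i : Fin n, |z i.succ| ^ q) ^ (1 / q)) (hz0pos : 0 < z 0)
    (horth : ⟪x, z⟫ = 0) :
    0 < x 0 ∧ ∀ i : Fin n,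
      (x 0)⁻¹ * x i.succ = -Real.sign (z i.succ) * |(z 0)⁻¹ * z i.succ| ^ (q - 1) := by
  have hp0 : (0:ℝ) < p := by linarith
  have hq0 : (0:ℝ) < q := by linarith
  have hconj : Real.HolderConjugate p q := Real.holderConjugate_iff.mpr ⟨hp, by rw [← one_div, ← one_div]; exact hpq⟩
  have hsumx_nonneg : 0 ≤ ∑ i : Fin n, |x i.succ| ^ p :=
    Finset.sum_nonneg fun i _ => Real.rpow_nonneg (abs_nonneg _) _
  have hsumz_nonneg : 0 ≤ ∑ i : Fin n, |z i.succ| ^ q :=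
    Finset.sum_nonneg fun i _ => Real.rpow_nonneg (abs_nonneg _) _
  -- x 0 > 0
  have hx0nn : 0 ≤ x 0 := le_trans (Real.rpow_nonneg hsumx_nonneg _) hx
  have hX0 : 0 < x 0 := by
    rcases hx0nn.lt_or_eq with h | h
    · exact h
    · exfalso
      apply hx0
      have hle : (∑ i : Fin n, |x i.succ| ^ p) ^ (1 / p) ≤ 0 := h ▸ hx
      have heq0 : (∑ i : Fin n, |x i.succ| ^ p) ^ (1 / p) = 0 :=
        le_antisymm hle (Real.rpow_nonneg hsumx_nonneg _)
      have hsum0 : (∑ i : Fin n, |x i.succ| ^ p) = 0 := by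
        by_contra hne
        exact hne (by
          have := Real.rpow_natCast
          rcases Real.rpow_eq_zero_iff_of_nonneg hsumx_nonneg |>.mp heq0 with ⟨h1, _⟩
          exact h1)
      have hall : ∀ i ∈ Finset.univ, |x (Fin.succ i)| ^ p = 0 :=
        (Finset.sum_eq_zero_iff_of_nonneg
          (fun i _ => Real.rpow_nonneg (abs_nonneg _) _)).mp hsum0
      ext i
      induction i using Fin.cases with
      | zero => exact h.symm
      | succ j =>
        have := hall j (Finset.mem_univ j)
        have habs : |x (Fin.succ j)| = 0 := by
          rcases (Real.rpow_eq_zero_iff_of_nonneg (abs_nonneg _)).mp this with ⟨h1, _⟩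
          exact h1
        simpa using abs_eq_zero.mp habs
  -- orthogonality expanded
  have hinner : ∑ i : Fin (n+1), x i * z i = 0 := by
    rw [← horth]
    rw [PiLp.inner_apply]
    simp [RCLike.inner_apply, mul_comm]
  have horth' : x 0 * z 0 + ∑ i : Fin n, x i.succ * z i.succ = 0 := by
    rw [← hinner, Fin.sum_univ_succ]
  -- sum bounds
  have hA : ∑ i : Fin n, |x i.succ| ^ p ≤ (x 0) ^ p := by
    have := Real.rpow_le_rpow (Real.rpow_nonneg hsumx_nonneg _) hx hp0.le
    rwa [← Real.rpow_mul hsumx_nonneg, one_div_mul_cancel hp0.ne', Real.rpow_one] at this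
  have hB : ∑ i : Fin n, |z i.succ| ^ q = (z 0) ^ q := by
    rw [hz0, ← Real.rpow_mul hsumz_nonneg, one_div_mul_cancel hq0.ne', Real.rpow_one]
  set X := x 0 with hXdef
  set Z := z 0 with hZdef
  -- the nonnegative summand
  set F : Fin n → ℝ := fun i =>
    (X⁻¹ * x i.succ) * (Z⁻¹ * z i.succ) + |X⁻¹ * x i.succ| ^ p / p
      + |Z⁻¹ * z i.succ| ^ q / q with hFdef
  have hFnn : ∀ i ∈ Finset.univ, 0 ≤ F i := by
    intro i _
    have hy := Real.young_inequality (X⁻¹ * x i.succ) (Z⁻¹ * z i.succ) hconj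
    have hle : -(|X⁻¹ * x i.succ| ^ p / p + |Z⁻¹ * z i.succ| ^ q / q)
        ≤ (X⁻¹ * x i.succ) * (Z⁻¹ * z i.succ) := by
      have := Real.young_inequality (-(X⁻¹ * x i.succ)) (Z⁻¹ * z i.succ) hconj
      rw [abs_neg] at this
      linarith
    simp only [hFdef]
    linarith
  -- abs-scaling identities
  have habsX : ∀ i : Fin n, |X⁻¹ * x i.succ| ^ p = X⁻¹ ^ p * |x i.succ| ^ p := by
    intro i
    rw [abs_mul, Real.mul_rpow (abs_nonneg _) (abs_nonneg _),
      abs_of_pos (inv_pos.mpr hX0)]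
  have habsZ : ∀ i : Fin n, |Z⁻¹ * z i.succ| ^ q = Z⁻¹ ^ q * |z i.succ| ^ q := by
    intro i
    rw [abs_mul, Real.mul_rpow (abs_nonneg _) (abs_nonneg _),
      abs_of_pos (inv_pos.mpr hz0pos)]
  have hXinvnn : (0:ℝ) ≤ X⁻¹ := (inv_pos.mpr hX0).le
  have hZinvnn : (0:ℝ) ≤ Z⁻¹ := (inv_pos.mpr hz0pos).le
  -- sum F ≤ 0
  have hsumF : ∑ i : Fin n, F i ≤ 0 := by
    have hsplit : ∑ i : Fin n, F i
        = (X⁻¹ * Z⁻¹) * (∑ i : Fin n, x i.succ * z i.succ)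
          + (X⁻¹ ^ p * ∑ i : Fin n, |x i.succ| ^ p) / p
          + (Z⁻¹ ^ q * ∑ i : Fin n, |z i.succ| ^ q) / q := by
      rw [hFdef]
      rw [Finset.mul_sum, Finset.mul_sum, Finset.mul_sum, Finset.sum_div, Finset.sum_div,
        ← Finset.sum_add_distrib, ← Finset.sum_add_distrib]
      apply Finset.sum_congr rfl
      intro i _
      simp only [habsX i, habsZ i]
      ring
    have h1 : (X⁻¹ * Z⁻¹) * (∑ i : Fin n, x i.succ * z i.succ) = -1 := by
      have hs : ∑ i : Fin n, x i.succ * z i.succ = -(X * Z) := by linarith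
      rw [hs]
      field_simp
    have h2 : X⁻¹ ^ p * ∑ i : Fin n, |x i.succ| ^ p ≤ 1 := by
      calc X⁻¹ ^ p * ∑ i : Fin n, |x i.succ| ^ p
          ≤ X⁻¹ ^ p * X ^ p := by
            apply mul_le_mul_of_nonneg_left hA (Real.rpow_nonneg hXinvnn _)
        _ = 1 := by
            rw [← Real.mul_rpow hXinvnn hX0.le, inv_mul_cancel₀ hX0.ne',
              Real.one_rpow]
    have h3 : Z⁻¹ ^ q * ∑ i : Fin n, |z i.succ| ^ q = 1 := by
      rw [hB, ← Real.mul_rpow hZinvnn hz0pos.le, inv_mul_cancel₀ hz0pos.ne',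
        Real.one_rpow]
    rw [hsplit, h1, h3]
    have h2' : (X⁻¹ ^ p * ∑ i : Fin n, |x i.succ| ^ p) / p ≤ 1 / p := by gcongr
    linarith
  -- each F i = 0
  have hFzero : ∀ i ∈ Finset.univ, F i = 0 := by
    apply (Finset.sum_eq_zero_iff_of_nonneg hFnn).mp
    exact le_antisymm hsumF (Finset.sum_nonneg hFnn)
  refine ⟨hX0, fun i => ?_⟩
  -- pointwise analysis
  set a := X⁻¹ * x i.succ with hadef
  set b := Z⁻¹ * z i.succ with hbdef
  have hF : a * b + |a| ^ p / p + |b| ^ q / q = 0 := hFzero i (Finset.mem_univ i)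
  have hyoung : |a| * |b| ≤ |a| ^ p / p + |b| ^ q / q :=
    Real.young_inequality_of_nonneg (abs_nonneg a) (abs_nonneg b) hconj
  have hlow : -(|a| * |b|) ≤ a * b := by
    rw [← abs_mul]; exact neg_abs_le _
  have hprod : a * b = -(|a| * |b|) := by linarith
  have heqY : |a| * |b| = |a| ^ p / p + |b| ^ q / q := by linarith
  have hpq' : |a| ^ p = |b| ^ q := young_eq (abs_nonneg a) (abs_nonneg b) hp hq hpq heqY
  have habs : |a| = |b| ^ (q - 1) := by
    have h1 : |a| = (|a| ^ p) ^ (1/p) := by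
      rw [← Real.rpow_mul (abs_nonneg a), mul_one_div_cancel hp0.ne', Real.rpow_one]
    rw [h1, hpq', ← Real.rpow_mul (abs_nonneg b)]
    congr 1
    have h1p : 1 / p = 1 - 1 / q := by linarith
    rw [h1p, mul_sub, mul_one, mul_one_div, div_self hq0.ne']
  have hzsucc : z i.succ = Z * b := by
    rw [hbdef]; field_simp
  rcases lt_trichotomy b 0 with hb | hb | hb
  · -- b < 0
    have hzneg : z i.succ < 0 := by
      rw [hzsucc]; exact mul_neg_of_pos_of_neg hz0pos hb
    have hsign : Real.sign (z i.succ) = -1 := Real.sign_of_neg hzneg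
    have habsb : |b| = -b := abs_of_neg hb
    have ha : a = |b| ^ (q - 1) := by
      have h2 : a * b = |b| ^ (q - 1) * b := by
        rw [hprod, habs, habsb]; ring
      exact mul_right_cancel₀ hb.ne h2
    rw [ha, hsign]
    ring
  · -- b = 0
    have hz' : z i.succ = 0 := by rw [hzsucc, hb, mul_zero]
    have ha : a = 0 := by
      have : |a| = 0 := by
        rw [habs, hb, abs_zero, Real.zero_rpow (by linarith : q - 1 ≠ 0)]
      exact abs_eq_zero.mp this
    rw [ha, hz', hb, Real.sign_zero]
    simp
  · -- b > 0
    have hzpos : 0 < z i.succ := by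
      rw [hzsucc]; exact mul_pos hz0pos hb
    have hsign : Real.sign (z i.succ) = 1 := Real.sign_of_pos hzpos
    have habsb : |b| = b := abs_of_pos hb
    have ha : a = -(|b| ^ (q - 1)) := by
      have h2 : a * b = -(|b| ^ (q - 1)) * b := by
        rw [hprod, habs, habsb]; ring
      exact mul_right_cancel₀ hb.ne' h2
    rw [ha, hsign]
    ring
end
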